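/- The set of parameters h ∈ [0,1) for which the orbit of the critical point 1/2 under the mod-1 reduced lifted Bernoulli shift map M̃_h is eventually periodic (i.e. there exist natural numbers m < n with M̃_h^m(1/2) = M̃_h^n(1/2), so that the generating orbit yields a finite Markov partition) is dense in [0,1). -/

import Mathlib

/-- The lifted Bernoulli shift map `M_h`. -/
noncomputable def bernM (h x : ℝ) : ℝ :=
  if Int.fract x < 1/2 then (⌊x⌋ : ℝ) + 2 * Int.fract x + h
  else (⌊x⌋ : ℝ) + 2 * Int.fract x - 1 - h

/-- The mod-1 reduced lifted Bernoulli shift map `M̃_h`. -/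
noncomputable def bernMt (h x : ℝ) : ℝ := Int.fract (bernM h x)

/-- Dyadic rationals with denominator `2^k`. -/
def Dy (k : ℕ) (x : ℝ) : Prop := ∃ z : ℤ, x = (z : ℝ) / 2 ^ k

lemma two_pow_ne (k : ℕ) : (2 : ℝ) ^ k ≠ 0 := by positivity

lemma dy_fract {k : ℕ} {x : ℝ} (h : Dy k x) : Dy k (Int.fract x) := by
  obtain ⟨z, rfl⟩ := h
  refine ⟨z - ⌊(z : ℝ) / 2 ^ k⌋ * 2 ^ k, ?_⟩
  rw [Int.fract]
  push_cast
  field_simp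

lemma dy_bernM {k : ℕ} (a : ℤ) {x : ℝ} (hx : Dy k x) :
    Dy k (bernM ((a : ℝ) / 2 ^ k) x) := by
  obtain ⟨z, hz⟩ := dy_fract hx
  unfold bernM
  split
  · refine ⟨⌊x⌋ * 2 ^ k + 2 * z + a, ?_⟩
    rw [hz]; push_cast; field_simp
  · refine ⟨⌊x⌋ * 2 ^ k + 2 * z - 2 ^ k - a, ?_⟩
    rw [hz]; push_cast; field_simp

lemma dy_bernMt {k : ℕ} (a : ℤ) {x : ℝ} (hx : Dy k x) :
    Dy k (bernMt ((a : ℝ) / 2 ^ k) x) :=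
  dy_fract (dy_bernM a hx)

theorem stmt2 :
    ∀ h₀ ∈ Set.Ico (0:ℝ) 1, h₀ ∈ closure {h : ℝ | h ∈ Set.Ico (0:ℝ) 1 ∧
      ∃ m n : ℕ, m < n ∧ (bernMt h)^[m] (1/2) = (bernMt h)^[n] (1/2)} := by
  rintro h₀ ⟨h0, h1⟩
  rw [Metric.mem_closure_iff]
  intro ε hε
  -- choose K with 1/2^K < ε
  obtain ⟨j, hj⟩ := exists_pow_lt_of_lt_one hε (by norm_num : (1/2 : ℝ) < 1)
  set K := j + 1 with hK
  have hKpos : (0 : ℝ) < 2 ^ K := by positivity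
  have hKlt : (1 : ℝ) / 2 ^ K < ε := by
    calc (1 : ℝ) / 2 ^ K = (1/2 : ℝ) ^ K := by rw [div_pow, one_pow]
    _ ≤ (1/2 : ℝ) ^ j := pow_le_pow_of_le_one (by norm_num) (by norm_num) (by omega)
    _ < ε := hj
  set a : ℤ := ⌊(2 : ℝ) ^ K * h₀⌋ with ha
  set h : ℝ := (a : ℝ) / 2 ^ K with hh
  have hfl : (a : ℝ) ≤ 2 ^ K * h₀ := Int.floor_le _
  have hfl' : (2 : ℝ) ^ K * h₀ < a + 1 := Int.lt_floor_add_one _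
  have hhle : h ≤ h₀ := by
    rw [hh, div_le_iff₀ hKpos]; linarith
  have ha0 : (0 : ℤ) ≤ a := Int.le_floor.mpr (by push_cast; positivity)
  have hh0 : 0 ≤ h := by
    rw [hh]
    apply div_nonneg _ hKpos.le
    exact_mod_cast ha0
  have hh1 : h < 1 := lt_of_le_of_lt hhle h1
  -- orbit dyadics
  have hhalf : Dy K (1/2 : ℝ) := by
    refine ⟨2 ^ j, ?_⟩
    rw [hK]
    push_cast
    rw [pow_succ]
    field_simp
  ring
  have hdy : ∀ n : ℕ, Dy K ((bernMt h)^[n] (1/2)) := by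
    intro n
    induction n with
    | zero => simpa using hhalf
    | succ n ih =>
        rw [Function.iterate_succ_apply']
        exact dy_bernMt a ih
  have hico : ∀ n : ℕ, (bernMt h)^[n] (1/2) ∈ Set.Ico (0:ℝ) 1 := by
    intro n
    cases n with
    | zero => norm_num
    | succ n =>
        rw [Function.iterate_succ_apply']
        exact ⟨Int.fract_nonneg _, Int.fract_lt_one _⟩
  -- each iterate equals its scaled floor over 2^K
  have hrep : ∀ n : ℕ, (bernMt h)^[n] (1/2)
      = (⌊(2:ℝ) ^ K * (bernMt h)^[n] (1/2)⌋ : ℝ) / 2 ^ K := by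
    intro n
    obtain ⟨z, hz⟩ := hdy n
    rw [hz]
    congr 1
    rw [mul_div_cancel₀ _ (two_pow_ne K), Int.floor_intCast]
  have hnn : ∀ p : ℕ, (0:ℤ) ≤ ⌊(2:ℝ) ^ K * (bernMt h)^[p] (1/2)⌋ := fun p =>
    Int.le_floor.mpr (by push_cast; exact mul_nonneg hKpos.le (hico p).1)
  have hltK : ∀ p : ℕ, ⌊(2:ℝ) ^ K * (bernMt h)^[p] (1/2)⌋ < ((2 ^ K : ℕ) : ℤ) := by
    intro p
    apply Int.floor_lt.mpr
    push_cast
    nlinarith [(hico p).2, (hico p).1, hKpos]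
  have hbound : ∀ n : ℕ, ⌊(2:ℝ) ^ K * (bernMt h)^[n] (1/2)⌋.toNat < 2 ^ K := by
    intro n
    have h1 := hnn n
    have h2 := hltK n
    omega
  haveI : NeZero (2 ^ K) := NeZero.of_pos (Nat.pow_pos (by norm_num))
  let F : ℕ → Fin (2 ^ K) := fun n =>
    ⟨⌊(2:ℝ) ^ K * (bernMt h)^[n] (1/2)⌋.toNat, hbound n⟩
  obtain ⟨m, n, hmn, hFeq⟩ := Finite.exists_ne_map_eq_of_infinite F
  have hiter : (bernMt h)^[m] (1/2) = (bernMt h)^[n] (1/2) := by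
    have hz : ⌊(2:ℝ) ^ K * (bernMt h)^[m] (1/2)⌋ = ⌊(2:ℝ) ^ K * (bernMt h)^[n] (1/2)⌋ := by
      have hv := congrArg Fin.val hFeq
      simp only [F] at hv
      have h1 := hnn m
      have h2 := hnn n
      omega
    rw [hrep m, hrep n, hz]
  -- conclude
  refine ⟨h, ⟨⟨hh0, hh1⟩, ?_⟩, ?_⟩
  · rcases lt_or_gt_of_ne hmn with hlt | hgt
    · exact ⟨m, n, hlt, hiter⟩
    · exact ⟨n, m, hgt, hiter.symm⟩
  · rw [Real.dist_eq, abs_of_nonneg (by linarith)]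
    have hkey : h₀ - h < 1 / 2 ^ K := by
      rw [hh, sub_lt_iff_lt_add, ← add_div, lt_div_iff₀ hKpos]
      linarith
    linarith
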